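/- For the complete graph K_n with n ≥ 3 and minimum fixing set D of size n−1, the fixing share of each v ∈ D equals n/2; consequently the fixing sum F_sum(K_n) = (n−1)n/2 and the fixing percentage F%(K_n) = 2/n. -/

import Mathlib

open scoped Classical

def fixesPair {V : Type*} (G : SimpleGraph V) (x u v : V) : Prop :=
  ∀ g : G ≃g G, g x = x → g u ≠ v ∧ g v ≠ u

def isFixingSet {V : Type*} (G : SimpleGraph V) (D : Set V) : Prop :=
  ∀ g : G ≃g G, (∀ v ∈ D, g v = v) → ∀ v : V, g v = v

/-- `D` is a minimum fixing set. -/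
def isMinFixingSet {n : ℕ} (G : SimpleGraph (Fin n)) (D : Finset (Fin n)) : Prop :=
  isFixingSet G ↑D ∧ ∀ E : Finset (Fin n), isFixingSet G ↑E → D.card ≤ E.card

/-- `V_s(G)`: unordered (encoded as increasing) pairs of distinct similar vertices. -/
noncomputable def VsG {n : ℕ} (G : SimpleGraph (Fin n)) : Finset (Fin n × Fin n) :=
  Finset.univ.filter (fun p => p.1 < p.2 ∧ ∃ g : G ≃g G, g p.1 = p.2)

/-- `F(x)`: the fixed neighborhood of `x`, the set of similar pairs fixed by `x`. -/
noncomputable def FxG {n : ℕ} (G : SimpleGraph (Fin n)) (x : Fin n) :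
    Finset (Fin n × Fin n) :=
  (VsG G).filter (fun p => fixesPair G x p.1 p.2)

/-- `𝓕(u,v) = {F(y) : y ∈ D, (u,v) ∈ F(y)}`. -/
noncomputable def calF {n : ℕ} (G : SimpleGraph (Fin n)) (D : Finset (Fin n))
    (p : Fin n × Fin n) : Finset (Finset (Fin n × Fin n)) :=
  (D.filter (fun y => p ∈ FxG G y)).image (FxG G)

/-- The fixing share `f(x;D) = Σ_{(u,v) ∈ F(x)} 1/|𝓕(u,v)|`. -/
noncomputable def fshare {n : ℕ} (G : SimpleGraph (Fin n)) (D : Finset (Fin n))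
    (x : Fin n) : ℚ :=
  ∑ p ∈ FxG G x, ((calF G D p).card : ℚ)⁻¹

/-- The fixing sum `F_sum(G) = Σ_{x ∈ D} f(x;D)`. -/
noncomputable def Fsum {n : ℕ} (G : SimpleGraph (Fin n)) (D : Finset (Fin n)) : ℚ :=
  ∑ x ∈ D, fshare G D x

/-- The fixing percentage `F%(G) = |D| / F_sum(G)`. -/
noncomputable def Fpct {n : ℕ} (G : SimpleGraph (Fin n)) (D : Finset (Fin n)) : ℚ :=
  (D.card : ℚ) / Fsum G D

/-- In `K_n` (`n ≥ 3`) with a minimum fixing set `D` (of size `n-1`), each `v ∈ D` has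
fixing share `n/2`; hence `F_sum = (n-1)n/2` and `F% = 2/n`. -/
noncomputable def permIso {n : ℕ} (e : Equiv.Perm (Fin n)) :
    (⊤ : SimpleGraph (Fin n)) ≃g (⊤ : SimpleGraph (Fin n)) :=
  SimpleGraph.Iso.completeGraph e

lemma permIso_apply {n : ℕ} (e : Equiv.Perm (Fin n)) (x : Fin n) : permIso e x = e x := rfl

lemma mem_FxG_top {n : ℕ} {x : Fin n} {p : Fin n × Fin n} :
    p ∈ FxG (⊤ : SimpleGraph (Fin n)) x ↔ p.1 < p.2 ∧ (x = p.1 ∨ x = p.2) := by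
  constructor
  · intro hp
    simp only [FxG, VsG, Finset.mem_filter, Finset.mem_univ, true_and] at hp
    obtain ⟨⟨hlt, -⟩, hfix⟩ := hp
    refine ⟨hlt, ?_⟩
    by_contra h
    push_neg at h
    have hx : permIso (Equiv.swap p.1 p.2) x = x := by
      rw [permIso_apply]
      exact Equiv.swap_apply_of_ne_of_ne h.1 h.2
    have := (hfix (permIso (Equiv.swap p.1 p.2)) hx).1
    exact this (by rw [permIso_apply, Equiv.swap_apply_left])
  · rintro ⟨hlt, hx⟩
    have hne : p.1 ≠ p.2 := ne_of_lt hlt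
    simp only [FxG, VsG, Finset.mem_filter, Finset.mem_univ, true_and]
    refine ⟨⟨hlt, ⟨permIso (Equiv.swap p.1 p.2), by rw [permIso_apply, Equiv.swap_apply_left]⟩⟩, ?_⟩
    intro g hg
    rcases hx with h | h
    · subst h
      rw [hg]
      exact ⟨hne, fun hc => hne (g.injective (by rw [hg, hc]))⟩
    · subst h
      rw [hg]
      exact ⟨fun hc => hne (g.injective (by rw [hg, hc])), Ne.symm hne⟩

lemma FxG_top_inj {n : ℕ} (hn : 3 ≤ n) :
    Function.Injective (FxG (⊤ : SimpleGraph (Fin n))) := by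
  intro x y h
  by_contra hxy
  have hcard : 1 < (Finset.univ.erase x : Finset (Fin n)).card := by
    rw [Finset.card_erase_of_mem (Finset.mem_univ x), Finset.card_univ, Fintype.card_fin]
    omega
  obtain ⟨z, hz, hzy⟩ := Finset.exists_mem_ne hcard y
  have hzx : z ≠ x := Finset.ne_of_mem_erase hz
  set q : Fin n × Fin n := if x < z then (x, z) else (z, x) with hq
  have hqx : q ∈ FxG (⊤ : SimpleGraph (Fin n)) x := by
    rcases lt_or_gt_of_ne (Ne.symm hzx) with hlt | hlt
    · rw [mem_FxG_top, hq, if_pos hlt]; exact ⟨hlt, Or.inl rfl⟩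
    · rw [mem_FxG_top, hq, if_neg (not_lt.mpr hlt.le)]; exact ⟨hlt, Or.inr rfl⟩
  rw [h, mem_FxG_top] at hqx
  rcases hqx.2 with hy | hy <;> rcases lt_or_gt_of_ne (Ne.symm hzx) with hlt | hlt <;>
    simp only [hq, if_pos, if_neg, not_lt.mpr hlt.le] at hy <;>
    first
      | exact hxy (by simp_all)
      | exact hzy (by simp_all)
      | simp_all

lemma calF_top_card {n : ℕ} (hn : 3 ≤ n) (D : Finset (Fin n)) {p : Fin n × Fin n}
    (hp : p.1 < p.2) :
    (calF (⊤ : SimpleGraph (Fin n)) D p).card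
      = (D.filter (fun y => y = p.1 ∨ y = p.2)).card := by
  unfold calF
  rw [Finset.card_image_of_injective _ (FxG_top_inj hn)]
  congr 1
  apply Finset.filter_congr
  intro y _
  simp [mem_FxG_top, hp]

lemma filter_pair_card {n : ℕ} (D : Finset (Fin n)) {a b : Fin n} (hab : a ≠ b) :
    (D.filter (fun y => y = a ∨ y = b)).card
      = (if a ∈ D then 1 else 0) + (if b ∈ D then 1 else 0) := by
  rw [Finset.filter_or, Finset.filter_eq', Finset.filter_eq']
  rcases Classical.em (a ∈ D) with ha | ha <;> rcases Classical.em (b ∈ D) with hb | hb <;>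
    simp only [ha, hb, if_true, if_false]
  · rw [Finset.card_union_of_disjoint (Finset.disjoint_singleton.mpr hab)]; simp
  · simp
  · simp
  · simp

lemma fshare_top {n : ℕ} (hn : 3 ≤ n) (D : Finset (Fin n)) (w : Fin n)
    (hw : ∀ u, u ∈ D ↔ u ≠ w) {v : Fin n} (hv : v ∈ D) :
    fshare (⊤ : SimpleGraph (Fin n)) D v = (n : ℚ) / 2 := by
  have hvw : v ≠ w := (hw v).mp hv
  unfold fshare
  have key : ∑ u ∈ Finset.univ.erase v, (if u = w then (1 : ℚ) else 1/2)
      = ∑ p ∈ FxG (⊤ : SimpleGraph (Fin n)) v,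
          ((calF (⊤ : SimpleGraph (Fin n)) D p).card : ℚ)⁻¹ := by
    refine Finset.sum_nbij' (fun u => if u < v then (u, v) else (v, u))
      (fun p => if p.1 = v then p.2 else p.1) ?_ ?_ ?_ ?_ ?_
    · intro u hu
      have huv : u ≠ v := Finset.ne_of_mem_erase hu
      rcases lt_or_gt_of_ne huv with hlt | hlt
      · rw [if_pos hlt, mem_FxG_top]; exact ⟨hlt, Or.inr rfl⟩
      · rw [if_neg (not_lt.mpr hlt.le), mem_FxG_top]; exact ⟨hlt, Or.inl rfl⟩
    · intro p hp
      rw [mem_FxG_top] at hp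
      obtain ⟨hlt, hx⟩ := hp
      rcases hx with h | h
      · rw [if_pos h.symm]
        exact Finset.mem_erase.mpr ⟨fun hc => absurd (hc ▸ h ▸ hlt) (lt_irrefl _), Finset.mem_univ _⟩
      · rw [if_neg (fun hc : p.1 = v => absurd (hc ▸ h ▸ hlt) (lt_irrefl _))]
        exact Finset.mem_erase.mpr ⟨fun hc => absurd (hc ▸ h ▸ hlt) (lt_irrefl _), Finset.mem_univ _⟩
    · intro u hu
      have huv : u ≠ v := Finset.ne_of_mem_erase hu
      rcases lt_or_gt_of_ne huv with hlt | hlt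
      · rw [if_pos hlt]; simp [huv]
      · rw [if_neg (not_lt.mpr hlt.le)]; simp [huv.symm]
    · intro p hp
      rw [mem_FxG_top] at hp
      obtain ⟨hlt, hx⟩ := hp
      rcases hx with h | h
      · rw [if_pos h.symm, if_neg (not_lt.mpr (h ▸ hlt).le)]
        exact Prod.ext h rfl
      · rw [if_neg (fun hc : p.1 = v => absurd (hc ▸ h ▸ hlt) (lt_irrefl _)),
          if_pos (h ▸ hlt)]
        exact Prod.ext rfl h
    · intro u hu
      have huv : u ≠ v := Finset.ne_of_mem_erase hu
      have main : ∀ q : Fin n × Fin n, q.1 < q.2 → (q.1 = u ∧ q.2 = v) ∨ (q.1 = v ∧ q.2 = u) →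
          ((calF (⊤ : SimpleGraph (Fin n)) D q).card : ℚ)⁻¹
            = if u = w then (1 : ℚ) else 1/2 := by
        intro q hq hque
        rcases hque with ⟨h1, h2⟩ | ⟨h1, h2⟩
        · rw [calF_top_card hn D hq, h1, h2, filter_pair_card D huv]
          rcases Classical.em (u = w) with huw | huw
          · have hu : u ∉ D := fun hc => ((hw u).mp hc) huw
            subst huw; simp [hu, hv]
          · have hu : u ∈ D := (hw u).mpr huw
            norm_num [hu, hv, huw]
        · rw [calF_top_card hn D hq, h1, h2, filter_pair_card D (Ne.symm huv)]
          rcases Classical.em (u = w) with huw | huw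
          · have hu : u ∉ D := fun hc => ((hw u).mp hc) huw
            subst huw; simp [hu, hv]
          · have hu : u ∈ D := (hw u).mpr huw
            norm_num [hu, hv, huw]
      rcases lt_or_gt_of_ne huv with hlt | hlt
      · rw [if_pos hlt]; exact (main (u, v) hlt (Or.inl ⟨rfl, rfl⟩)).symm
      · rw [if_neg (not_lt.mpr hlt.le)]; exact (main (v, u) hlt (Or.inr ⟨rfl, rfl⟩)).symm
  rw [← key]
  have hsplit : ∀ u : Fin n, (if u = w then (1 : ℚ) else 1/2)
      = 1/2 + (if u = w then (1 : ℚ)/2 else 0) := by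
    intro u; rcases Classical.em (u = w) with h | h <;> simp [h]; norm_num
  rw [Finset.sum_congr rfl (fun u _ => hsplit u), Finset.sum_add_distrib,
    Finset.sum_const, Finset.sum_ite_eq' _ w,
    if_pos (Finset.mem_erase.mpr ⟨Ne.symm hvw, Finset.mem_univ w⟩),
    Finset.card_erase_of_mem (Finset.mem_univ v), Finset.card_univ, Fintype.card_fin]
  have : ((n - 1 : ℕ) : ℚ) = (n : ℚ) - 1 := by
    have : (1 : ℕ) ≤ n := by omega
    push_cast [this]; ring
  rw [nsmul_eq_mul, this]
  ring

theorem stmt14 {n : ℕ} (hn : 3 ≤ n) (D : Finset (Fin n))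
    (hD : isMinFixingSet (⊤ : SimpleGraph (Fin n)) D) (hcard : D.card = n - 1) :
    (∀ v ∈ D, fshare (⊤ : SimpleGraph (Fin n)) D v = (n : ℚ) / 2) ∧
      Fsum (⊤ : SimpleGraph (Fin n)) D = ((n : ℚ) - 1) * n / 2 ∧
      Fpct (⊤ : SimpleGraph (Fin n)) D = 2 / (n : ℚ) := by
  -- the unique vertex not in D
  have hcompl : Dᶜ.card = 1 := by
    rw [Finset.card_compl, hcard, Fintype.card_fin]
    omega
  obtain ⟨w, hwset⟩ := Finset.card_eq_one.mp hcompl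
  have hw : ∀ u, u ∈ D ↔ u ≠ w := by
    intro u
    constructor
    · intro hu hc
      have : u ∈ Dᶜ := hwset ▸ Finset.mem_singleton.mpr hc
      exact (Finset.mem_compl.mp this) hu
    · intro hu
      by_contra hc
      have : u ∈ Dᶜ := Finset.mem_compl.mpr hc
      exact hu (Finset.mem_singleton.mp (hwset ▸ this))
  have hshare : ∀ v ∈ D, fshare (⊤ : SimpleGraph (Fin n)) D v = (n : ℚ) / 2 :=
    fun v hv => fshare_top hn D w hw hv
  have hsum : Fsum (⊤ : SimpleGraph (Fin n)) D = ((n : ℚ) - 1) * n / 2 := by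
    unfold Fsum
    rw [Finset.sum_congr rfl hshare, Finset.sum_const, hcard, nsmul_eq_mul]
    have h1 : (1 : ℕ) ≤ n := by omega
    have : ((n - 1 : ℕ) : ℚ) = (n : ℚ) - 1 := by push_cast [h1]; ring
    rw [this]; ring
  refine ⟨hshare, hsum, ?_⟩
  unfold Fpct
  rw [hsum, hcard]
  have h1 : (1 : ℕ) ≤ n := by omega
  have hc : ((n - 1 : ℕ) : ℚ) = (n : ℚ) - 1 := by push_cast [h1]; ring
  have hn0 : (n : ℚ) ≠ 0 := by positivity
  have hn1 : (n : ℚ) - 1 ≠ 0 := by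
    have : (3 : ℚ) ≤ (n : ℚ) := by exact_mod_cast hn
    linarith
  rw [hc]
  field_simp
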